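/- (Spread law) Suppose a non-null triangle U, V, W (three distinct non-collinear points with Q_U, Q_V, Q_W all nonzero) has quadrances Q_W = Q(U,V), Q_U = Q(V,W), Q_V = Q(U,W) and spreads s_U, s_V, s_W. Then s_U/Q_U = s_V/Q_V = s_W/Q_W. -/

import Mathlib

/-- The quadrance between points `U` and `W` with respect to the bilinear form `B`. -/
def quadrance {F : Type*} [Field F] {M : Type*} [AddCommGroup M] [Module F M]
    (B : LinearMap.BilinForm F M) (U W : M) : F :=
  B (W - U) (W - U)

/-- The spread between the lines `U W` and `X Z` with respect to the bilinear form `B`. -/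
def spread {F : Type*} [Field F] {M : Type*} [AddCommGroup M] [Module F M]
    (B : LinearMap.BilinForm F M) (U W X Z : M) : F :=
  1 - (B (W - U) (Z - X)) ^ 2 / (quadrance B U W * quadrance B X Z)

theorem spread_law
    {F : Type*} [Field F] (hchar : (2 : F) ≠ 0)
    {M : Type*} [AddCommGroup M] [Module F M]
    (B : LinearMap.BilinForm F M) (hsym : ∀ x y : M, B x y = B y x)
    (U V W : M) (hUV : U ≠ V) (hUW : U ≠ W) (hVW : V ≠ W)
    (hncol : ∀ a b : F, a • (V - U) + b • (W - U) = 0 → a = 0 ∧ b = 0)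
    (hQU : quadrance B V W ≠ 0) (hQV : quadrance B U W ≠ 0)
    (hQW : quadrance B U V ≠ 0)
 :
    spread B U V U W / quadrance B V W = spread B V U V W / quadrance B U W ∧
      spread B V U V W / quadrance B U W = spread B W U W V / quadrance B U V := by
  set a := V - U with ha
  set b := W - U with hb
  have h1 : W - V = b - a := by rw [ha, hb]; abel
  have h2 : U - V = -a := by rw [ha]; abel
  have h3 : U - W = -b := by rw [hb]; abel
  have h4 : V - W = a - b := by rw [ha, hb]; abel
  set x := B a a with hx
  set y := B b b with hy
  set z := B a b with hz
  have hba : B b a = z := (hsym b a).trans rfl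
  have eQU : quadrance B V W = x + y - 2 * z := by
    simp only [quadrance, h1, map_sub, LinearMap.sub_apply, ← hx, ← hy, ← hz, hba]
    ring
  have eQV : quadrance B U W = y := rfl
  have eQW : quadrance B U V = x := rfl
  have eQVU : quadrance B V U = x := by
    simp only [quadrance, h2, map_neg, LinearMap.neg_apply, neg_neg, ← hx]
  have eQWU : quadrance B W U = y := by
    simp only [quadrance, h3, map_neg, LinearMap.neg_apply, neg_neg, ← hy]
  have eQWV : quadrance B W V = x + y - 2 * z := by
    simp only [quadrance, h4, map_sub, LinearMap.sub_apply, ← hx, ← hy, ← hz, hba]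
    ring
  have eBU : B (U - V) (W - V) = x - z := by
    simp only [h1, h2, map_neg, map_sub, LinearMap.neg_apply, LinearMap.sub_apply, ← hx, ← hz]
    ring
  have eBW : B (U - W) (V - W) = y - z := by
    simp only [h3, h4, map_neg, map_sub, LinearMap.neg_apply, LinearMap.sub_apply,
      ← hy, hba]
    ring
  rw [eQU] at hQU
  rw [eQV] at hQV
  rw [eQW] at hQW
  have eBV : B (V - U) (W - U) = z := by rw [← ha, ← hb, ← hz]
  simp only [spread, eQU, eQV, eQW, eQVU, eQWU, eQWV, eBU, eBW, eBV]
  clear_value x y z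
  constructor <;> (rw [div_eq_div_iff (by assumption) (by assumption), one_sub_div (by positivity), one_sub_div (mul_ne_zero (by assumption) (by assumption)), div_mul_eq_mul_div, div_mul_eq_mul_div, div_eq_div_iff (mul_ne_zero (by assumption) (by assumption)) (mul_ne_zero (by assumption) (by assumption))]; ring)
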